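/- (i) For every K ⊆ L• and every α ∈ L•: if K |≈_PT α, then K |≈_PT' α. (ii) The converse fails: for P = {f, p, r} consisting of three distinct atoms and K' = {•⊤ → (¬p ∧ ¬r), •p → ¬f, •r → •f, p → ¬r}, we have K' |≈_PT' •⊤ → ¬f but not K' |≈_PT •⊤ → ¬f. -/

import Mathlib

attribute [local instance] Classical.propDecidable

universe u

/-- Sentences of Propositional Typicality Logic over atoms `P`. -/
inductive PTL (P : Type u) : Type u
  | atom : P → PTL P
  | neg  : PTL P → PTL P
  | conj : PTL P → PTL P → PTL P
  | top  : PTL P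
  | bot  : PTL P
  | typ  : PTL P → PTL P

namespace PTL

/-- Material implication, defined from `¬` and `∧`. -/
def impl {P : Type u} (a b : PTL P) : PTL P := neg (conj a (neg b))

/-- Disjunction, defined from `¬` and `∧`. -/
def disj {P : Type u} (a b : PTL P) : PTL P := neg (conj (neg a) (neg b))

/-- Purely propositional sentences: no occurrence of the typicality operator. -/
def IsProp {P : Type u} : PTL P → Prop
  | atom _ => True
  | neg a => IsProp a
  | conj a b => IsProp a ∧ IsProp b
  | top => True
  | bot => True
  | typ _ => False

end PTL

/-- Propositional valuations. -/
abbrev Val (P : Type u) := P → Bool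

/-- Satisfaction of a PTL sentence by a valuation, relative to a ranking
function `rho : Val P → ℕ∞`. -/
def satR {P : Type u} (rho : Val P → ℕ∞) : Val P → PTL P → Prop
  | v, PTL.atom p => v p = true
  | v, PTL.neg a => ¬ satR rho v a
  | v, PTL.conj a b => satR rho v a ∧ satR rho v b
  | _, PTL.top => True
  | _, PTL.bot => False
  | v, PTL.typ a => satR rho v a ∧ ∀ v', rho v' < rho v → ¬ satR rho v' a

/-- The convexity property of ranking functions. -/
def RkConvex {P : Type u} (rho : Val P → ℕ∞) : Prop :=
  ∀ (v : Val P) (i : ℕ), rho v = (i : ℕ∞) → ∀ j : ℕ, j < i → ∃ v', rho v' = (j : ℕ∞)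

/-- A ranked interpretation: a convex ranking function on valuations. -/
structure RankedInterp (P : Type u) where
  rk : Val P → ℕ∞
  convex : RkConvex rk

/-- `rho` is a ranked model of `a`: every possible valuation satisfies `a`. -/
def modelsR {P : Type u} (rho : Val P → ℕ∞) (a : PTL P) : Prop :=
  ∀ v, rho v < ⊤ → satR rho v a

/-- `R ⊨ a`. -/
def RankedInterp.models {P : Type u} (R : RankedInterp P) (a : PTL P) : Prop :=
  modelsR R.rk a

/-- `R` is a ranked model of the knowledge base `K`. -/
def modelsSet {P : Type u} (R : RankedInterp P) (K : Set (PTL P)) : Prop :=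
  ∀ a ∈ K, R.models a

/-- Ranked entailment consequences of `K`. -/
def Cn0 {P : Type u} (K : Set (PTL P)) : Set (PTL P) :=
  {a | ∀ R : RankedInterp P, modelsSet R K → R.models a}

/-- The PT preference `⪯_PT` on ranking functions: pointwise comparison. -/
def PTle {P : Type u} (rho1 rho2 : Val P → ℕ∞) : Prop :=
  ∀ w, rho1 w ≤ rho2 w

/-- Strict PT preference. -/
def PTlt {P : Type u} (rho1 rho2 : Val P → ℕ∞) : Prop :=
  PTle rho1 rho2 ∧ ¬ PTle rho2 rho1

/-- `Mod(K)`: the set of ranked models of `K`. -/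
def ModSet {P : Type u} (K : Set (PTL P)) : Set (RankedInterp P) :=
  {R | modelsSet R K}

/-- The PT-minimal ranked models of `K`. -/
def minPT {P : Type u} (K : Set (PTL P)) : Set (RankedInterp P) :=
  {R ∈ ModSet K | ¬ ∃ R' ∈ ModSet K, PTlt R'.rk R.rk}

/-- PT-entailment consequences of `K`. -/
def CnPT {P : Type u} (K : Set (PTL P)) : Set (PTL P) :=
  {a | ∀ R ∈ minPT K, R.models a}

/-- The atom `f` ("flies"). -/
def fA : PTL (Fin 3) := PTL.atom 0
/-- The atom `p` ("penguin"). -/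
def pA : PTL (Fin 3) := PTL.atom 1
/-- The atom `r` ("robin"). -/
def rA : PTL (Fin 3) := PTL.atom 2

/-- The set of possible valuations of a ranked interpretation. -/
def possSet {P : Type u} (R : RankedInterp P) : Set (Val P) :=
  {v | R.rk v < ⊤}

/-- The PT-minimal models of `K` with `⊆`-maximal sets of possible
valuations. -/
def minPT' {P : Type u} (K : Set (PTL P)) : Set (RankedInterp P) :=
  {R ∈ minPT K | ¬ ∃ R' ∈ minPT K, possSet R ⊂ possSet R'}

/-- PT-entailment. -/
def PTentails {P : Type u} (K : Set (PTL P)) (a : PTL P) : Prop :=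
  ∀ R ∈ minPT K, R.models a

/-- PT'-entailment. -/
def PTentails' {P : Type u} (K : Set (PTL P)) (a : PTL P) : Prop :=
  ∀ R ∈ minPT' K, R.models a

/-- The knowledge base `{•⊤ → (¬p ∧ ¬r), •p → ¬f, •r → •f, p → ¬r}`. -/
def Keg' : Set (PTL (Fin 3)) :=
  {PTL.impl (PTL.typ PTL.top) (PTL.conj (PTL.neg pA) (PTL.neg rA)),
   PTL.impl (PTL.typ pA) (PTL.neg fA),
   PTL.impl (PTL.typ rA) (PTL.typ fA),
   PTL.impl pA (PTL.neg rA)}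

/- ### Auxiliary machinery -/

/-- A valuation on three atoms from three bits. -/
def val3 (a b c : Bool) : Val (Fin 3)
  | ⟨0, _⟩ => a
  | ⟨1, _⟩ => b
  | ⟨2, _⟩ => c

theorem val_eta (v : Val (Fin 3)) : v = val3 (v 0) (v 1) (v 2) := by
  funext i
  match i with
  | ⟨0, _⟩ => rfl
  | ⟨1, _⟩ => rfl
  | ⟨2, _⟩ => rfl

theorem val_forall {Q : Val (Fin 3) → Prop} (h : ∀ a b c, Q (val3 a b c)) :
    ∀ v, Q v := fun v => (val_eta v) ▸ h (v 0) (v 1) (v 2)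

def dOfIff {a b : Prop} (h : a ↔ b) (d : Decidable a) : Decidable b :=
  match d with
  | Decidable.isTrue ha => Decidable.isTrue (h.mp ha)
  | Decidable.isFalse ha => Decidable.isFalse (fun hb => ha (h.mpr hb))

def dNot {p : Prop} (d : Decidable p) : Decidable ¬p :=
  match d with
  | Decidable.isTrue h => Decidable.isFalse (fun hn => hn h)
  | Decidable.isFalse h => Decidable.isTrue h

def dAnd {p q : Prop} (dp : Decidable p) (dq : Decidable q) : Decidable (p ∧ q) :=
  match dp with
  | Decidable.isFalse h => Decidable.isFalse (fun hpq => h hpq.1)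
  | Decidable.isTrue hp =>
    match dq with
    | Decidable.isTrue hq => Decidable.isTrue ⟨hp, hq⟩
    | Decidable.isFalse hq => Decidable.isFalse (fun hpq => hq hpq.2)

def dImp {p q : Prop} (dp : Decidable p) (dq : Decidable q) : Decidable (p → q) :=
  match dp with
  | Decidable.isFalse h => Decidable.isTrue (fun hp => absurd hp h)
  | Decidable.isTrue hp =>
    match dq with
    | Decidable.isTrue hq => Decidable.isTrue (fun _ => hq)
    | Decidable.isFalse hq => Decidable.isFalse (fun h => hq (h hp))

def dAllB {Q : Bool → Prop} (d : ∀ b, Decidable (Q b)) : Decidable (∀ b, Q b) :=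
  match d false, d true with
  | Decidable.isTrue hf, Decidable.isTrue ht =>
      Decidable.isTrue (fun b => by cases b; exact hf; exact ht)
  | Decidable.isFalse hf, _ => Decidable.isFalse (fun h => hf (h false))
  | _, Decidable.isFalse ht => Decidable.isFalse (fun h => ht (h true))

def dAllV {Q : Val (Fin 3) → Prop} (d : ∀ v, Decidable (Q v)) :
    Decidable (∀ v, Q v) :=
  dOfIff ⟨fun h => val_forall h, fun h a b c => h (val3 a b c)⟩
    (dAllB (fun a => dAllB (fun b => dAllB (fun c => d (val3 a b c)))))

def decSat (rho : Val (Fin 3) → ℕ∞) : (a : PTL (Fin 3)) → (v : Val (Fin 3)) →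
    Decidable (satR rho v a)
  | PTL.atom p, v => instDecidableEqBool (v p) true
  | PTL.neg a, v => dNot (decSat rho a v)
  | PTL.conj a b, v => dAnd (decSat rho a v) (decSat rho b v)
  | PTL.top, _ => Decidable.isTrue trivial
  | PTL.bot, _ => Decidable.isFalse (fun h => h)
  | PTL.typ a, v =>
      dAnd (decSat rho a v)
        (dAllV (fun v' => dImp (WithTop.decidableLT (rho v') (rho v))
          (dNot (decSat rho a v'))))

def decModels (rho : Val (Fin 3) → ℕ∞) (a : PTL (Fin 3)) :
    Decidable (modelsR rho a) :=
  dAllV (fun v => dImp (WithTop.decidableLT (rho v) ⊤) (decSat rho a v))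

/- ### The two ranked interpretations -/

def rho1 : Val (Fin 3) → ℕ∞ :=
  fun v => cond (v 2) ⊤ (cond (v 1) (cond (v 0) 2 1) 0)

def rho2 : Val (Fin 3) → ℕ∞ :=
  fun v => cond (v 2) (cond (v 1) ⊤ (cond (v 0) 1 2))
    (cond (v 1) (cond (v 0) 2 1) (cond (v 0) 1 0))
lemma conv1 : RkConvex rho1 := by
  intro v i h j hj
  have hval : rho1 (val3 false false false) = 0 := rfl
  have hval1 : rho1 (val3 false true false) = 1 := rfl
  cases h0 : v 0 <;> cases h1 : v 1 <;> cases h2 : v 2 <;>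
    simp only [rho1, h0, h1, h2, cond_true, cond_false] at h <;>
    first
      | (have hi : i = 0 := by exact_mod_cast h.symm
         omega)
      | (have hi : i = 1 := by exact_mod_cast h.symm
         subst hi
         interval_cases j
         exact ⟨_, hval⟩)
      | (have hi : i = 2 := by exact_mod_cast h.symm
         subst hi
         interval_cases j
         · exact ⟨_, hval⟩
         · exact ⟨_, hval1⟩)
      | exact absurd h.symm (by simp)

lemma conv2 : RkConvex rho2 := by
  intro v i h j hj
  have hval : rho2 (val3 false false false) = 0 := rfl
  have hval1 : rho2 (val3 false true false) = 1 := rfl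
  cases h0 : v 0 <;> cases h1 : v 1 <;> cases h2 : v 2 <;>
    simp only [rho2, h0, h1, h2, cond_true, cond_false] at h <;>
    first
      | (have hi : i = 0 := by exact_mod_cast h.symm
         omega)
      | (have hi : i = 1 := by exact_mod_cast h.symm
         subst hi
         interval_cases j
         exact ⟨_, hval⟩)
      | (have hi : i = 2 := by exact_mod_cast h.symm
         subst hi
         interval_cases j
         · exact ⟨_, hval⟩
         · exact ⟨_, hval1⟩)
      | exact absurd h.symm (by simp)

def Rone : RankedInterp (Fin 3) := ⟨rho1, conv1⟩
def Rtwo : RankedInterp (Fin 3) := ⟨rho2, conv2⟩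

lemma Rone_model : modelsSet Rone Keg' := by
  intro a ha
  have h1 : modelsR rho1 (PTL.impl (PTL.typ PTL.top) (PTL.conj (PTL.neg pA) (PTL.neg rA))) :=
    @of_decide_eq_true _ (decModels _ _) (by rfl)
  have h2 : modelsR rho1 (PTL.impl (PTL.typ pA) (PTL.neg fA)) :=
    @of_decide_eq_true _ (decModels _ _) (by rfl)
  have h3 : modelsR rho1 (PTL.impl (PTL.typ rA) (PTL.typ fA)) :=
    @of_decide_eq_true _ (decModels _ _) (by rfl)
  have h4 : modelsR rho1 (PTL.impl pA (PTL.neg rA)) :=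
    @of_decide_eq_true _ (decModels _ _) (by rfl)
  simp only [Keg', Set.mem_insert_iff, Set.mem_singleton_iff] at ha
  rcases ha with rfl | rfl | rfl | rfl <;> assumption

lemma Rtwo_model : modelsSet Rtwo Keg' := by
  intro a ha
  have h1 : modelsR rho2 (PTL.impl (PTL.typ PTL.top) (PTL.conj (PTL.neg pA) (PTL.neg rA))) :=
    @of_decide_eq_true _ (decModels _ _) (by rfl)
  have h2 : modelsR rho2 (PTL.impl (PTL.typ pA) (PTL.neg fA)) :=
    @of_decide_eq_true _ (decModels _ _) (by rfl)
  have h3 : modelsR rho2 (PTL.impl (PTL.typ rA) (PTL.typ fA)) :=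
    @of_decide_eq_true _ (decModels _ _) (by rfl)
  have h4 : modelsR rho2 (PTL.impl pA (PTL.neg rA)) :=
    @of_decide_eq_true _ (decModels _ _) (by rfl)
  simp only [Keg', Set.mem_insert_iff, Set.mem_singleton_iff] at ha
  rcases ha with rfl | rfl | rfl | rfl <;> assumption

lemma Rone_not_alpha : ¬ Rone.models (PTL.impl (PTL.typ PTL.top) (PTL.neg fA)) :=
  @of_decide_eq_true _ (dNot (decModels rho1 _)) (by rfl)
/- Abbreviations for the relevant valuations -/
def w000 : Val (Fin 3) := val3 false false false
def w100 : Val (Fin 3) := val3 true false false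
def w010 : Val (Fin 3) := val3 false true false
def w110 : Val (Fin 3) := val3 true true false
def w001 : Val (Fin 3) := val3 false false true
def w101 : Val (Fin 3) := val3 true false true

lemma mem1 : PTL.impl (PTL.typ PTL.top) (PTL.conj (PTL.neg pA) (PTL.neg rA)) ∈ Keg' := by
  simp [Keg']
lemma mem2 : PTL.impl (PTL.typ pA) (PTL.neg fA) ∈ Keg' := by simp [Keg']
lemma mem3 : PTL.impl (PTL.typ rA) (PTL.typ fA) ∈ Keg' := by simp [Keg']
lemma mem4 : PTL.impl pA (PTL.neg rA) ∈ Keg' := by simp [Keg']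

lemma zero_lt_top' : (0 : ℕ∞) < ⊤ := lt_top_iff_ne_top.mpr (by simp)

section General
variable {R : RankedInterp (Fin 3)} (hm : modelsSet R Keg')
include hm

/-- Lemma A: rank-0 worlds satisfy ¬p ∧ ¬r. -/
lemma lemA (v : Val (Fin 3)) (h0 : R.rk v = 0) : v 1 = false ∧ v 2 = false := by
  have h : ¬ (satR R.rk v (PTL.typ PTL.top) ∧
      ¬ (¬ (v 1 = true) ∧ ¬ (v 2 = true))) :=
    hm _ mem1 v (by rw [h0]; exact zero_lt_top')
  have htyp : satR R.rk v (PTL.typ PTL.top) :=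
    ⟨trivial, fun v' hv' => absurd hv' (by rw [h0]; exact not_lt.mpr (zero_le))⟩
  have hc : ¬ (v 1 = true) ∧ ¬ (v 2 = true) := not_not.mp (fun hn => h ⟨htyp, hn⟩)
  exact ⟨by simpa using hc.1, by simpa using hc.2⟩

/-- Lemma B: possible worlds satisfy ¬(p ∧ r). -/
lemma lemB (v : Val (Fin 3)) (hf : R.rk v < ⊤) : ¬ (v 1 = true ∧ v 2 = true) := by
  have h : ¬ (v 1 = true ∧ ¬ ¬ (v 2 = true)) := hm _ mem4 v hf
  exact fun ⟨h1, h2⟩ => h ⟨h1, not_not.mpr h2⟩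

/-- Lemma E: if w001 is possible, then w101 is strictly below it. -/
lemma lemE (h001 : R.rk w001 < ⊤) : R.rk w101 < R.rk w001 := by
  by_contra hc
  push_neg at hc
  have h : ¬ (satR R.rk w001 (PTL.typ rA) ∧ ¬ satR R.rk w001 (PTL.typ fA)) :=
    hm _ mem3 w001 h001
  have htyp : satR R.rk w001 (PTL.typ rA) := by
    refine ⟨rfl, ?_⟩
    intro v' hv' hr
    have hr' : v' 2 = true := hr
    cases hb0 : v' 0 <;> cases hb1 : v' 1 <;>
      rw [val_eta v', hb0, hb1, hr'] at hv'
    · exact absurd hv' (lt_irrefl _)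
    · exact lemB hm _ (hv'.trans h001) ⟨rfl, rfl⟩
    · exact absurd hv' (not_lt.mpr hc)
    · exact lemB hm _ (hv'.trans h001) ⟨rfl, rfl⟩
  have hF : satR R.rk w001 (PTL.typ fA) := not_not.mp (fun hn => h ⟨htyp, hn⟩)
  exact nomatch hF.1

/-- Lemma F: if w101 is possible, it lies below w100 and w110. -/
lemma lemF (h101 : R.rk w101 < ⊤) : R.rk w101 ≤ R.rk w100 ∧ R.rk w101 ≤ R.rk w110 := by
  have h : ¬ (satR R.rk w101 (PTL.typ rA) ∧ ¬ satR R.rk w101 (PTL.typ fA)) :=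
    hm _ mem3 w101 h101
  have htyp : satR R.rk w101 (PTL.typ rA) := by
    refine ⟨rfl, ?_⟩
    intro v' hv' hr
    have hr' : v' 2 = true := hr
    cases hb0 : v' 0 <;> cases hb1 : v' 1 <;>
      rw [val_eta v', hb0, hb1, hr'] at hv'
    · exact absurd (lemE hm (hv'.trans h101)) (asymm hv')
    · exact lemB hm _ (hv'.trans h101) ⟨rfl, rfl⟩
    · exact absurd hv' (lt_irrefl _)
    · exact lemB hm _ (hv'.trans h101) ⟨rfl, rfl⟩
  have hF : satR R.rk w101 (PTL.typ fA) := not_not.mp (fun hn => h ⟨htyp, hn⟩)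
  have hmin : ∀ v', R.rk v' < R.rk w101 → ¬ satR R.rk v' fA := hF.2
  constructor
  · by_contra hc
    push_neg at hc
    exact hmin w100 hc rfl
  · by_contra hc
    push_neg at hc
    exact hmin w110 hc rfl

/-- Lemma G: if w110 is possible, then w010 is strictly below it. -/
lemma lemG (h110 : R.rk w110 < ⊤) : R.rk w010 < R.rk w110 := by
  by_contra hc
  push_neg at hc
  have h : ¬ (satR R.rk w110 (PTL.typ pA) ∧ ¬ ¬ (satR R.rk w110 fA)) :=
    hm _ mem2 w110 h110
  have htyp : satR R.rk w110 (PTL.typ pA) := by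
    refine ⟨rfl, ?_⟩
    intro v' hv' hp
    have hp' : v' 1 = true := hp
    cases hb0 : v' 0 <;> cases hb2 : v' 2 <;>
      rw [val_eta v', hb0, hp', hb2] at hv'
    · exact absurd hv' (not_lt.mpr hc)
    · exact lemB hm _ (hv'.trans h110) ⟨rfl, rfl⟩
    · exact absurd hv' (lt_irrefl _)
    · exact lemB hm _ (hv'.trans h110) ⟨rfl, rfl⟩
  exact h ⟨htyp, not_not.mpr rfl⟩

end General
lemma two_le {a b : ℕ∞} (h1 : 1 ≤ a) (h2 : a < b) : 2 ≤ b :=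
  calc (2:ℕ∞) = 1 + 1 := by norm_num
  _ ≤ a + 1 := add_le_add_left h1 1
  _ ≤ b := Order.add_one_le_of_lt h2

lemma one_lt_top' : (1 : ℕ∞) < ⊤ := lt_top_iff_ne_top.mpr (by simp)
lemma two_lt_top' : (2 : ℕ∞) < ⊤ := lt_top_iff_ne_top.mpr (by simp)

lemma hn0_gen {R : RankedInterp (Fin 3)} (hm : modelsSet R Keg') :
    ∀ v : Val (Fin 3), (v 1 = true ∨ v 2 = true) → R.rk v ≠ 0 := by
  intro v hv h0
  obtain ⟨e1, e2⟩ := lemA hm v h0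
  rcases hv with h | h
  · rw [h] at e1; simp at e1
  · rw [h] at e2; simp at e2

lemma hBtop_gen {R : RankedInterp (Fin 3)} (hm : modelsSet R Keg') :
    ∀ v : Val (Fin 3), v 1 = true → v 2 = true → R.rk v = ⊤ := by
  intro v h1 h2
  by_contra hne
  exact lemB hm v (lt_top_iff_ne_top.mpr hne) ⟨h1, h2⟩

lemma min1 : Rone ∈ minPT Keg' := by
  refine ⟨Rone_model, ?_⟩
  rintro ⟨R', hR', hle, hnle⟩
  apply hnle
  have hR'm : modelsSet R' Keg' := hR'
  have h100 : R'.rk w100 = 0 := le_antisymm (hle w100) (zero_le)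
  have h101 : R'.rk w101 = ⊤ := by
    by_contra hne
    have := (lemF hR'm (lt_top_iff_ne_top.mpr hne)).1
    rw [h100] at this
    exact hn0_gen hR'm w101 (Or.inr rfl) (le_antisymm this (zero_le))
  have h001 : R'.rk w001 = ⊤ := by
    by_contra hne
    have := lemE hR'm (lt_top_iff_ne_top.mpr hne)
    rw [h101] at this
    exact absurd this not_top_lt
  have h010 : 1 ≤ R'.rk w010 :=
    ENat.one_le_iff_ne_zero.mpr (hn0_gen hR'm w010 (Or.inl rfl))
  have h110 : 2 ≤ R'.rk w110 := by
    rcases eq_or_ne (R'.rk w110) ⊤ with h | h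
    · rw [h]; exact le_top
    · exact two_le h010 (lemG hR'm (lt_top_iff_ne_top.mpr h))
  show ∀ v, Rone.rk v ≤ R'.rk v
  refine val_forall ?_
  intro a b c
  cases a <;> cases b <;> cases c
  · exact zero_le
  · show _ ≤ R'.rk w001; rw [h001]; exact le_top
  · exact h010
  · show _ ≤ R'.rk (val3 false true true)
    rw [hBtop_gen hR'm _ rfl rfl]; exact le_top
  · exact zero_le
  · show _ ≤ R'.rk w101; rw [h101]; exact le_top
  · exact h110
  · show _ ≤ R'.rk (val3 true true true)
    rw [hBtop_gen hR'm _ rfl rfl]; exact le_top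

lemma min2 : Rtwo ∈ minPT Keg' := by
  refine ⟨Rtwo_model, ?_⟩
  rintro ⟨R', hR', hle, hnle⟩
  apply hnle
  have hR'm : modelsSet R' Keg' := hR'
  have h100 : 1 ≤ R'.rk w100 := by
    rw [ENat.one_le_iff_ne_zero]
    intro h0
    have h101f : R'.rk w101 < ⊤ := lt_of_le_of_lt (hle w101) one_lt_top'
    have := (lemF hR'm h101f).1
    rw [h0] at this
    exact hn0_gen hR'm w101 (Or.inr rfl) (le_antisymm this (zero_le))
  have h010 : 1 ≤ R'.rk w010 :=
    ENat.one_le_iff_ne_zero.mpr (hn0_gen hR'm w010 (Or.inl rfl))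
  have h101 : 1 ≤ R'.rk w101 :=
    ENat.one_le_iff_ne_zero.mpr (hn0_gen hR'm w101 (Or.inr rfl))
  have h110 : 2 ≤ R'.rk w110 :=
    two_le h010 (lemG hR'm (lt_of_le_of_lt (hle w110) two_lt_top'))
  have h001 : 2 ≤ R'.rk w001 :=
    two_le h101 (lemE hR'm (lt_of_le_of_lt (hle w001) two_lt_top'))
  show ∀ v, Rtwo.rk v ≤ R'.rk v
  refine val_forall ?_
  intro a b c
  cases a <;> cases b <;> cases c
  · exact zero_le
  · exact h001
  · exact h010
  · show _ ≤ R'.rk (val3 false true true)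
    rw [hBtop_gen hR'm _ rfl rfl]; exact le_top
  · exact h100
  · exact h101
  · exact h110
  · show _ ≤ R'.rk (val3 true true true)
    rw [hBtop_gen hR'm _ rfl rfl]; exact le_top

/-- Part (ii): every PT'-minimal model validates •⊤ → ¬f. -/
lemma part2 : PTentails' Keg' (PTL.impl (PTL.typ PTL.top) (PTL.neg fA)) := by
  rintro R ⟨hmin, hmax⟩
  have hm : modelsSet R Keg' := hmin.1
  intro v hv
  show ¬ (satR R.rk v (PTL.typ PTL.top) ∧ ¬ ¬ (satR R.rk v fA))
  rintro ⟨⟨-, htyp⟩, hf⟩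
  have hf' : v 0 = true := not_not.mp hf
  -- the rank of v must be 0
  have h0 : R.rk v = 0 := by
    rcases eq_or_ne (R.rk v) ⊤ with h | h
    · rw [h] at hv; exact absurd hv (lt_irrefl _)
    · obtain ⟨n, hn⟩ := (WithTop.ne_top_iff_exists).mp h
      rcases Nat.eq_zero_or_pos n with h0 | hpos
      · rw [← hn, h0]; rfl
      · obtain ⟨v', hv'⟩ := R.convex v n hn.symm 0 hpos
        exact absurd trivial
          (htyp v' (by rw [hv', ← hn]; exact Nat.cast_pos.mpr hpos))
  obtain ⟨e1, e2⟩ := lemA hm v h0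
  have hveq : v = w100 := by rw [val_eta v, hf', e1, e2]; rfl
  rw [hveq] at h0
  -- but then w101 and w001 are impossible in R, while they are possible in Rtwo
  have h101 : R.rk w101 = ⊤ := by
    by_contra hne
    have := (lemF hm (lt_top_iff_ne_top.mpr hne)).1
    rw [h0] at this
    exact hn0_gen hm w101 (Or.inr rfl) (le_antisymm this (zero_le))
  apply hmax
  refine ⟨Rtwo, min2, ?_⟩
  rw [Set.ssubset_def]
  constructor
  · intro u hu
    show Rtwo.rk u < ⊤
    have hu' : R.rk u < ⊤ := hu
    cases hb0 : u 0 <;> cases hb1 : u 1 <;> cases hb2 : u 2 <;>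
      rw [val_eta u, hb0, hb1, hb2]
    · exact zero_lt_top'
    · exact two_lt_top'
    · exact one_lt_top'
    · exact absurd (hBtop_gen hm u hb1 hb2) (lt_top_iff_ne_top.mp hu')
    · exact one_lt_top'
    · exact one_lt_top'
    · exact two_lt_top'
    · exact absurd (hBtop_gen hm u hb1 hb2) (lt_top_iff_ne_top.mp hu')
  · intro hsup
    have : R.rk w101 < ⊤ := hsup (show Rtwo.rk w101 < ⊤ from one_lt_top')
    rw [h101] at this
    exact absurd this (lt_irrefl _)


/-- PT'-entailment extends PT-entailment, and the extension is
strict: for the example knowledge base, `•⊤ → ¬f` is PT'-entailed but not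
PT-entailed. -/
theorem ptl_PT'_stronger_than_PT :
    (∀ (P : Type) [Fintype P] [DecidableEq P]
        (K : Set (PTL P)) (a : PTL P), PTentails K a → PTentails' K a) ∧
    PTentails' Keg' (PTL.impl (PTL.typ PTL.top) (PTL.neg fA)) ∧
    ¬ PTentails Keg' (PTL.impl (PTL.typ PTL.top) (PTL.neg fA)) := by
  refine ⟨fun P _ _ K a h R hR => h R hR.1, part2, fun h => Rone_not_alpha (h Rone min1)⟩
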